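/- Correctness of the single-pass matching statistics algorithm: given valid matching statistics MS[i+1] = (pos, len) with q = ISA[pos], if BWT[q] ≠ P[i], and p', p'' are the text positions whose suffixes are the nearest suffixes (in suffix-array order, below and above rank q) preceded in T by P[i], then MS[i] = (p*−1, 1 + min(len, LCE(p*, pos))) is a valid matching statistic at position i, where p* ∈ {p', p''} maximizes min(len, LCE(p*, pos)). -/
import Mathlib


/-- `lce T a b` = length of the longest common prefix of the suffixes
`T[a..]` and `T[b..]`. -/
noncomputable def lce {α : Type*} (T : List α) (a b : ℕ) : ℕ :=
  letI := Classical.decPred (fun ℓ : ℕ => (T.drop a).take ℓ = (T.drop b).take ℓ)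
  Nat.findGreatest (fun ℓ : ℕ => (T.drop a).take ℓ = (T.drop b).take ℓ) T.length

/-- The Burrows-Wheeler transform: `bwt T SA i = T[SA[i] - 1]` (circularly). -/
def bwt {α : Type*} [Inhabited α] (T : List α) (SA : ℕ → ℕ) (i : ℕ) : α :=
  T[(SA i + T.length - 1) % T.length]!

lemma lce_spec {α : Type*} (T : List α) (a b : ℕ) :
    (T.drop a).take (lce T a b) = (T.drop b).take (lce T a b) := by
  letI := Classical.decPred (fun ℓ : ℕ => (T.drop a).take ℓ = (T.drop b).take ℓ)
  unfold lce
  exact Nat.findGreatest_spec (P := fun ℓ : ℕ => (T.drop a).take ℓ = (T.drop b).take ℓ)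
    (Nat.zero_le _) rfl

lemma le_lce {α : Type*} {T : List α} {a b k : ℕ} (hk : k ≤ T.length)
    (h : (T.drop a).take k = (T.drop b).take k) : k ≤ lce T a b := by
  letI := Classical.decPred (fun ℓ : ℕ => (T.drop a).take ℓ = (T.drop b).take ℓ)
  unfold lce
  exact Nat.le_findGreatest hk h

lemma take_of_take_eq {α : Type*} {A B : List α} {k m : ℕ}
    (h : A.take m = B.take m) (hkm : k ≤ m) : A.take k = B.take k := by
  have := congrArg (List.take k) h
  simpa [List.take_take, Nat.min_eq_left hkm] using this

lemma drop_eq_cons {α : Type*} [Inhabited α] {T : List α} {x : ℕ} (h : x < T.length) :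
    T.drop x = T[x]! :: T.drop (x + 1) := by
  rw [getElem!_pos T x h]
  exact List.drop_eq_getElem_cons h

lemma bwt_eq {α : Type*} [Inhabited α] {T : List α} {SA : ℕ → ℕ} {r : ℕ}
    (h1 : 1 ≤ SA r) (h2 : SA r < T.length) : bwt T SA r = T[SA r - 1]! := by
  unfold bwt
  congr 1
  have he : SA r + T.length - 1 = (SA r - 1) + T.length := by omega
  rw [he, Nat.add_mod_right]
  exact Nat.mod_eq_of_lt (by omega)

lemma lex_sandwich {α : Type*} [LinearOrder α] :
    ∀ (k : ℕ) (X Y Z : List α), List.Lex (· < ·) X Y → List.Lex (· < ·) Y Z →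
      X.take k = Z.take k → Y.take k = X.take k := by
  intro k
  induction k with
  | zero => simp
  | succ k ih =>
    intro X Y Z hXY hYZ hXZ
    cases X with
    | nil =>
      have hZ : Z = [] := by
        simpa [List.take_eq_nil_iff] using hXZ.symm
      subst hZ
      cases hYZ
    | cons x X' =>
      cases Z with
      | nil => simp at hXZ
      | cons z Z' =>
        simp only [List.take_succ_cons, List.cons.injEq] at hXZ
        obtain ⟨hxz, hXZ'⟩ := hXZ
        subst hxz
        cases hXY with
        | rel h1 =>
          cases hYZ with
          | rel h2 => exact absurd (h1.trans h2) (lt_irrefl _)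
          | cons h2 => exact absurd h1 (lt_irrefl _)
        | cons h1 =>
          cases hYZ with
          | rel h2 => exact absurd h2 (lt_irrefl _)
          | cons h2 =>
            simp only [List.take_succ_cons, List.cons.injEq]
            exact ⟨trivial, ih _ _ _ h1 h2 hXZ'⟩

/-- correctness of the single-pass matching statistics
algorithm: given valid matching statistics `MS[i+1] = (pos, len)` with rank
`q = ISA[pos]`, if `BWT[q] ≠ P[i]` and `q'` (resp. `q''`) is the nearest rank
below (resp. above) `q` whose BWT character is `P[i]`, with corresponding
text positions `p' = SA[q']`, `p'' = SA[q'']`, then, for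
`p* ∈ {p', p''}` maximizing `min(len, LCE(p*, pos))` and
`ℓ = min(len, LCE(p*, pos))`, the pair `MS[i] = (p* - 1, ℓ + 1)` is a valid
matching statistic at position `i` (both conditions of the definition hold). -/
theorem single_pass_ms_step_correct {α : Type*} [LinearOrder α] [Inhabited α]
    (T P : List α) (SA ISA : ℕ → ℕ)
    (hn : 0 < T.length)
    (hSA : ∀ k, k < T.length → SA k < T.length)
    (hsorted : ∀ k l, k < l → l < T.length →
      List.Lex (· < ·) (T.drop (SA k)) (T.drop (SA l)))
    (hISA : ∀ p, p < T.length → ISA p < T.length ∧ SA (ISA p) = p)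
    (hsent : ∀ k, k < T.length - 1 → T[T.length - 1]! < T[k]!)
    (i pos len : ℕ)
    (hiP : i < P.length)
    (hpos : pos < T.length)
    (hlenP : i + 1 + len ≤ P.length)
    (hlenT : pos + len ≤ T.length)
    (hoccur : (T.drop pos).take len = (P.drop (i + 1)).take len)
    (hmaximal : i + 1 + len = P.length ∨ ¬ ((P.drop (i + 1)).take (len + 1) <:+: T))
    (hmismatch : bwt T SA (ISA pos) ≠ P[i]!)
    (q' q'' : ℕ)
    (hq'lt : q' < ISA pos) (hq''gt : ISA pos < q'') (hq''n : q'' < T.length)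
    (hbq' : bwt T SA q' = P[i]!) (hbq'' : bwt T SA q'' = P[i]!)
    (hnear' : ∀ k, q' < k → k < ISA pos → bwt T SA k ≠ P[i]!)
    (hnear'' : ∀ k, ISA pos < k → k < q'' → bwt T SA k ≠ P[i]!)
    (hp'1 : 1 ≤ SA q') (hp''1 : 1 ≤ SA q'') :
    let p' := SA q'
    let p'' := SA q''
    let ℓ := max (min len (lce T p' pos)) (min len (lce T p'' pos))
    let pstar := if min len (lce T p'' pos) ≤ min len (lce T p' pos) then p' else p''
    (P.drop i).take (ℓ + 1) = (T.drop (pstar - 1)).take (ℓ + 1) ∧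
      (i + (ℓ + 1) = P.length ∨ ¬ ((P.drop i).take (ℓ + 2) <:+: T)) := by
  intro p' p'' ℓ pstar
  obtain ⟨hqn, hSAq⟩ := hISA pos hpos
  have hq'n : q' < T.length := lt_trans hq'lt hqn
  have hp'n : p' < T.length := hSA q' hq'n
  have hp''n : p'' < T.length := hSA q'' hq''n
  have hℓdef : ℓ = max (min len (lce T p' pos)) (min len (lce T p'' pos)) := rfl
  have hℓlen : ℓ ≤ len := by
    rw [hℓdef]; exact max_le (min_le_left _ _) (min_le_left _ _)
  -- facts about pstar
  have hps : 1 ≤ pstar ∧ pstar < T.length ∧ T[pstar - 1]! = P[i]! ∧ ℓ ≤ lce T pstar pos := by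
    by_cases hc : min len (lce T p'' pos) ≤ min len (lce T p' pos)
    · have hpd : pstar = p' := if_pos hc
      refine ⟨hpd ▸ hp'1, hpd ▸ hp'n, ?_, ?_⟩
      · rw [hpd, ← bwt_eq hp'1 hp'n]; exact hbq'
      · rw [hpd, hℓdef, max_eq_left hc]; exact min_le_right _ _
    · have hpd : pstar = p'' := if_neg hc
      push_neg at hc
      refine ⟨hpd ▸ hp''1, hpd ▸ hp''n, ?_, ?_⟩
      · rw [hpd, ← bwt_eq hp''1 hp''n]; exact hbq''
      · rw [hpd, hℓdef, max_eq_right hc.le]; exact min_le_right _ _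
  obtain ⟨hps1, hpsn, hpshead, hpslce⟩ := hps
  -- Part 1
  have htail : (T.drop pstar).take ℓ = (P.drop (i + 1)).take ℓ := by
    have h1 : (T.drop pstar).take ℓ = (T.drop pos).take ℓ :=
      take_of_take_eq (lce_spec T pstar pos) hpslce
    rw [h1]
    exact take_of_take_eq hoccur hℓlen
  have part1 : (P.drop i).take (ℓ + 1) = (T.drop (pstar - 1)).take (ℓ + 1) := by
    rw [drop_eq_cons hiP, drop_eq_cons (show pstar - 1 < T.length by omega),
      List.take_succ_cons, List.take_succ_cons,
      show pstar - 1 + 1 = pstar by omega]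
    rw [hpshead, htail]
  refine ⟨part1, ?_⟩
  by_cases hend : i + (ℓ + 1) = P.length
  · exact Or.inl hend
  right
  intro hinf
  have hiP2 : i + (ℓ + 2) ≤ P.length := by omega
  -- decompose the take
  have hPd : (P.drop i).take (ℓ + 2) = P[i]! :: (P.drop (i + 1)).take (ℓ + 1) := by
    rw [drop_eq_cons hiP, List.take_succ_cons]
  by_cases hℓeq : ℓ = len
  · rcases hmaximal with h | h
    · omega
    · apply h
      have hsuf : (P.drop (i + 1)).take (len + 1) <:+ (P.drop i).take (ℓ + 2) := by
        rw [hPd, hℓeq]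
        exact List.suffix_cons _ _
      exact hsuf.isInfix.trans hinf
  -- case ℓ < len
  have hℓ1len : ℓ + 1 ≤ len := by omega
  have hℓ1n : ℓ + 1 ≤ T.length := by omega
  obtain ⟨s, u, hT⟩ := hinf
  have hSlen : ((P.drop i).take (ℓ + 2)).length = ℓ + 2 := by
    simp [List.length_take, List.length_drop]; omega
  have htn : s.length + (ℓ + 2) ≤ T.length := by
    have := congrArg List.length hT
    simp only [List.length_append, hSlen] at this
    omega
  have hocc2 : (T.drop s.length).take (ℓ + 2) = (P.drop i).take (ℓ + 2) := by
    rw [← hT, List.append_assoc, List.drop_left, List.take_left' hSlen]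
  have hhead2 : T[s.length]! = P[i]! ∧
      (T.drop (s.length + 1)).take (ℓ + 1) = (P.drop (i + 1)).take (ℓ + 1) := by
    rw [hPd, drop_eq_cons (show s.length < T.length by omega), List.take_succ_cons,
      List.cons.injEq] at hocc2
    exact hocc2
  have ht1n : s.length + 1 < T.length := by omega
  obtain ⟨hrn, hSAr⟩ := hISA (s.length + 1) ht1n
  have hbwtr : bwt T SA (ISA (s.length + 1)) = P[i]! := by
    rw [bwt_eq (by rw [hSAr]; omega) (by rw [hSAr]; omega), hSAr,
      Nat.add_sub_cancel]
    exact hhead2.1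
  set r := ISA (s.length + 1) with hrdef
  have hT1pos : (T.drop (s.length + 1)).take (ℓ + 1) = (T.drop pos).take (ℓ + 1) := by
    rw [hhead2.2]
    exact (take_of_take_eq hoccur hℓ1len).symm
  rcases lt_trichotomy r (ISA pos) with hlt | heq | hgt
  · have hrq' : r ≤ q' := by
      by_contra hc
      push_neg at hc
      exact hnear' r hc hlt hbwtr
    have hkey : (T.drop p').take (ℓ + 1) = (T.drop pos).take (ℓ + 1) := by
      rcases eq_or_lt_of_le hrq' with he | hl
      · have : p' = s.length + 1 := by rw [show p' = SA q' from rfl, ← he, hSAr]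
        rw [this]; exact hT1pos
      · have hXY := hsorted r q' hl hq'n
        have hYZ := hsorted q' (ISA pos) hq'lt hqn
        rw [hSAq] at hYZ
        rw [hSAr] at hXY
        rw [← hT1pos]
        have := lex_sandwich (ℓ + 1) _ _ _ hXY hYZ hT1pos
        rw [this]
    have h1 : ℓ + 1 ≤ lce T p' pos := le_lce hℓ1n hkey
    have h2 : min len (lce T p' pos) ≤ ℓ := hℓdef ▸ le_max_left _ _
    omega
  · exact hmismatch (heq ▸ hbwtr)
  · have hrq'' : q'' ≤ r := by
      by_contra hc
      push_neg at hc
      exact hnear'' r hgt hc hbwtr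
    have hkey : (T.drop p'').take (ℓ + 1) = (T.drop pos).take (ℓ + 1) := by
      rcases eq_or_lt_of_le hrq'' with he | hl
      · have : p'' = s.length + 1 := by rw [show p'' = SA q'' from rfl, he, hSAr]
        rw [this]; exact hT1pos
      · have hXY := hsorted (ISA pos) q'' hq''gt hq''n
        have hYZ := hsorted q'' r hl hrn
        rw [hSAq] at hXY
        rw [hSAr] at hYZ
        exact lex_sandwich (ℓ + 1) _ _ _ hXY hYZ hT1pos.symm
    have h1 : ℓ + 1 ≤ lce T p'' pos := le_lce hℓ1n hkey
    have h2 : min len (lce T p'' pos) ≤ ℓ := hℓdef ▸ le_max_right _ _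
    omega
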